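/- arXiv:1512.04905 — 3 statements merged into one kernel-verified Lean document; each statement's English description precedes it below -/
import Mathlib

section
/- Let F = x₀(Σ_{i=1}^n ε_i x_i²) ∈ ℝ[x₀,…,xₙ] with ε_i ∈ {−1,+1}. Then the real Waring rank of F satisfies 2n ≤ rk_ℝ(F) ≤ 2n+1, and if Σ_{i=1}^n ε_i = 0 then rk_ℝ(F) = 2n. -/
open MvPolynomial

/-- `L` is a real linear form (an `ℝ`-linear combination of the variables). -/
def IsLinearForm {n : ℕ} (L : MvPolynomial (Fin (n + 1)) ℝ) : Prop :=
  ∃ a : Fin (n + 1) → ℝ, L = ∑ i, C (a i) * X i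

lemma lin_X {n : ℕ} (j : Fin (n+1)) : IsLinearForm (X j) := by
  refine ⟨fun i => if i = j then 1 else 0, ?_⟩
  rw [Finset.sum_eq_single j]
  · simp
  · intro b _ hb; simp [hb]
  · simp

lemma lin_add {n : ℕ} {p q : MvPolynomial (Fin (n+1)) ℝ} (hp : IsLinearForm p)
    (hq : IsLinearForm q) : IsLinearForm (p + q) := by
  obtain ⟨a, ha⟩ := hp; obtain ⟨b, hb⟩ := hq
  refine ⟨fun i => a i + b i, ?_⟩
  rw [ha, hb, ← Finset.sum_add_distrib]
  exact Finset.sum_congr rfl fun i _ => by rw [map_add]; ring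

lemma lin_sub {n : ℕ} {p q : MvPolynomial (Fin (n+1)) ℝ} (hp : IsLinearForm p)
    (hq : IsLinearForm q) : IsLinearForm (p - q) := by
  obtain ⟨a, ha⟩ := hp; obtain ⟨b, hb⟩ := hq
  refine ⟨fun i => a i - b i, ?_⟩
  rw [ha, hb, ← Finset.sum_sub_distrib]
  exact Finset.sum_congr rfl fun i _ => by rw [map_sub]; ring

-- per-term identity
lemma cube_pair {n : ℕ} (a : ℝ) (i : Fin n) :
    (C (a/6) * (X 0 + X i.succ) ^ 3 + C (a/6) * (X 0 - X i.succ) ^ 3 :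
      MvPolynomial (Fin (n+1)) ℝ)
    = C a * (X 0 * X i.succ ^ 2) + C (a/3) * X 0 ^ 3 := by
  have h1 : (C a : MvPolynomial (Fin (n+1)) ℝ) = 6 * C (a/6) := by
    rw [← map_ofNat (C : ℝ →+* MvPolynomial (Fin (n+1)) ℝ) 6, ← map_mul]
    congr 1; field_simp
  have h2 : (C (a/3) : MvPolynomial (Fin (n+1)) ℝ) = 2 * C (a/6) := by
    rw [← map_ofNat (C : ℝ →+* MvPolynomial (Fin (n+1)) ℝ) 2, ← map_mul]
    congr 1; ring
  rw [h1, h2]; ring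

lemma decomp_key (n : ℕ) (ε : Fin (n + 1) → ℝ) :
    (X 0 * ∑ i : Fin (n + 1), if i = 0 then 0 else C (ε i) * X i ^ 2 :
      MvPolynomial (Fin (n+1)) ℝ)
    = (∑ i : Fin n, C (ε i.succ / 6) * (X 0 + X i.succ) ^ 3
       + ∑ i : Fin n, C (ε i.succ / 6) * (X 0 - X i.succ) ^ 3)
      + C (-(∑ i ∈ Finset.univ.erase 0, ε i) / 3) * X 0 ^ 3 := by
  have hS : (∑ i ∈ Finset.univ.erase 0, ε i) = ∑ i : Fin n, ε i.succ := by
    rw [show (Finset.univ.erase (0 : Fin (n+1))) = Finset.univ.image Fin.succ by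
      ext j
      simp only [Finset.mem_erase, Finset.mem_univ, and_true, Finset.mem_image, true_and]
      constructor
      · intro hj; exact ⟨j.pred hj, by simp⟩
      · rintro ⟨i, _, rfl⟩; exact Fin.succ_ne_zero i]
    rw [Finset.sum_image (by intro a _ b _ h; exact Fin.succ_injective _ h)]
  rw [← Finset.sum_add_distrib]
  have hper : ∀ i : Fin n, C (ε i.succ / 6) * (X 0 + X i.succ) ^ 3
      + C (ε i.succ / 6) * (X 0 - X i.succ) ^ 3
      = C (ε i.succ) * (X 0 * X i.succ ^ 2) + C (ε i.succ / 3) * (X 0 ^ 3 :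
        MvPolynomial (Fin (n+1)) ℝ) := fun i => cube_pair _ i
  rw [Finset.sum_congr rfl fun i _ => hper i, Finset.sum_add_distrib, hS]
  have h3 : (∑ i : Fin n, C (ε i.succ / 3) * (X 0 ^ 3 : MvPolynomial (Fin (n+1)) ℝ))
      = C ((∑ i : Fin n, ε i.succ) / 3) * X 0 ^ 3 := by
    rw [← Finset.sum_mul, ← map_sum, Finset.sum_div]
  rw [h3]
  have h4 : (∑ i : Fin (n+1), if i = 0 then 0 else C (ε i) * X i ^ 2 :
      MvPolynomial (Fin (n+1)) ℝ) = ∑ i : Fin n, C (ε i.succ) * X i.succ ^ 2 := by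
    rw [Fin.sum_univ_succ]
    simp [Fin.succ_ne_zero]
  rw [h4, Finset.mul_sum]
  have h5 : (C (-(∑ i : Fin n, ε i.succ) / 3) : MvPolynomial (Fin (n+1)) ℝ)
      = - C ((∑ i : Fin n, ε i.succ) / 3) := by
    rw [← map_neg, neg_div]
  rw [h5]
  ring_nf

lemma part1 (n : ℕ) (ε : Fin (n + 1) → ℝ) :
    ∃ (c : Fin (2 * n + 1) → ℝ) (L : Fin (2 * n + 1) → MvPolynomial (Fin (n + 1)) ℝ),
      (∀ k, IsLinearForm (L k)) ∧
      (X 0 * ∑ i : Fin (n + 1), if i = 0 then 0 else C (ε i) * X i ^ 2)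
        = ∑ k, C (c k) * L k ^ 3 := by
  let e : ((Fin n ⊕ Fin n) ⊕ Fin 1) ≃ Fin (2*n+1) :=
    ((finSumFinEquiv.sumCongr (Equiv.refl (Fin 1))).trans finSumFinEquiv).trans
      (finCongr (by omega))
  let g : ((Fin n ⊕ Fin n) ⊕ Fin 1) → ℝ × MvPolynomial (Fin (n+1)) ℝ := fun j =>
    match j with
    | .inl (.inl i) => (ε i.succ / 6, X 0 + X i.succ)
    | .inl (.inr i) => (ε i.succ / 6, X 0 - X i.succ)
    | .inr _ => (-(∑ i ∈ Finset.univ.erase 0, ε i)/3, X 0)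
  refine ⟨fun k => (g (e.symm k)).1, fun k => (g (e.symm k)).2, ?_, ?_⟩
  · intro k
    show IsLinearForm (g (e.symm k)).2
    rcases e.symm k with (i|i)|i
    · exact lin_add (lin_X 0) (lin_X i.succ)
    · exact lin_sub (lin_X 0) (lin_X i.succ)
    · exact lin_X 0
  · rw [← Equiv.sum_comp e (fun k => C ((g (e.symm k)).1) * (g (e.symm k)).2 ^ 3)]
    simp only [Equiv.symm_apply_apply]
    rw [Fintype.sum_sum_type, Fintype.sum_sum_type, Fin.sum_univ_one]
    exact decomp_key n ε

lemma part3 (n : ℕ) (ε : Fin (n + 1) → ℝ) (hS : (∑ i ∈ Finset.univ.erase 0, ε i) = 0) :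
    ∃ (c : Fin (2 * n) → ℝ) (L : Fin (2 * n) → MvPolynomial (Fin (n + 1)) ℝ),
      (∀ k, IsLinearForm (L k)) ∧
      (X 0 * ∑ i : Fin (n + 1), if i = 0 then 0 else C (ε i) * X i ^ 2)
        = ∑ k, C (c k) * L k ^ 3 := by
  let e : (Fin n ⊕ Fin n) ≃ Fin (2*n) := finSumFinEquiv.trans (finCongr (by omega))
  let g : (Fin n ⊕ Fin n) → ℝ × MvPolynomial (Fin (n+1)) ℝ := fun j =>
    match j with
    | .inl i => (ε i.succ / 6, X 0 + X i.succ)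
    | .inr i => (ε i.succ / 6, X 0 - X i.succ)
  refine ⟨fun k => (g (e.symm k)).1, fun k => (g (e.symm k)).2, ?_, ?_⟩
  · intro k
    show IsLinearForm (g (e.symm k)).2
    rcases e.symm k with i|i
    · exact lin_add (lin_X 0) (lin_X i.succ)
    · exact lin_sub (lin_X 0) (lin_X i.succ)
  · rw [← Equiv.sum_comp e (fun k => C ((g (e.symm k)).1) * (g (e.symm k)).2 ^ 3)]
    simp only [Equiv.symm_apply_apply]
    rw [Fintype.sum_sum_type]
    rw [decomp_key n ε, hS]
    norm_num
    rfl

lemma avoid {ι : Type*} [DecidableEq ι] (n : ℕ) (K : Finset ι) (m : ι → Fin n → ℝ)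
    (h : ∀ k ∈ K, m k ≠ 0) :
    ∃ u : Fin n → ℝ, ∀ k ∈ K, (∑ i, m k i * u i) ≠ 0 := by
  classical
  induction K using Finset.induction with
  | empty => exact ⟨0, by simp⟩
  | @insert k K hk ih =>
    obtain ⟨u, hu⟩ := ih (fun j hj => h j (Finset.mem_insert_of_mem hj))
    have hmk : m k ≠ 0 := h k (Finset.mem_insert_self k K)
    have hsv : (0:ℝ) < ∑ i, m k i * m k i := by
      have hex : ∃ i, m k i ≠ 0 := by
        by_contra hc
        push_neg at hc
        exact hmk (funext hc)
      obtain ⟨i0, hi0⟩ := hex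
      exact Finset.sum_pos' (fun i _ => mul_self_nonneg _)
        ⟨i0, Finset.mem_univ i0, mul_self_pos.mpr hi0⟩
    set T : Finset ℝ := (insert k K).image
      (fun j => -(∑ i, m j i * u i)/(∑ i, m j i * m k i)) with hT
    obtain ⟨t, ht⟩ := Infinite.exists_notMem_finset T
    refine ⟨fun i => u i + t * m k i, ?_⟩
    have key : ∀ j, (∑ i, m j i * (u i + t * m k i))
        = (∑ i, m j i * u i) + t * (∑ i, m j i * m k i) := by
      intro j
      rw [Finset.mul_sum, ← Finset.sum_add_distrib]
      exact Finset.sum_congr rfl fun i _ => by ring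
    intro j hj
    rw [key j]
    by_cases hjv : (∑ i, m j i * m k i) = 0
    · rcases Finset.mem_insert.mp hj with rfl | hjK
      · exact absurd hjv (ne_of_gt hsv)
      · simpa [hjv] using hu j hjK
    · intro hzero
      apply ht
      rw [hT]
      refine Finset.mem_image.mpr ⟨j, hj, ?_⟩
      field_simp
      linarith [hzero]

lemma part2 (n : ℕ) (ε : Fin (n + 1) → ℝ)
    (hε : ∀ i, i ≠ 0 → ε i = 1 ∨ ε i = -1)
    (s : ℕ) (c : Fin s → ℝ) (a : Fin s → Fin (n + 1) → ℝ)
    (hid : ∀ x : Fin (n + 1) → ℝ,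
      x 0 * (∑ i : Fin (n + 1), if i = 0 then 0 else ε i * x i ^ 2)
        = ∑ k, c k * (∑ i, a k i * x i) ^ 3) :
    2 * n ≤ s := by
  classical
  set α : Fin s → ℝ := fun k => a k 0 with hα
  set m : Fin s → Fin n → ℝ := fun k i => a k i.succ with hm
  set d : Fin s → (Fin n → ℝ) → ℝ := fun k y => ∑ i, m k i * y i with hd
  set Q : (Fin n → ℝ) → ℝ := fun y => ∑ i : Fin n, ε i.succ * y i ^ 2 with hQdef
  -- linearity facts for d
  have dadd : ∀ k (y z : Fin n → ℝ), d k (fun i => y i + z i) = d k y + d k z := by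
    intro k y z
    simp only [hd, mul_add, Finset.sum_add_distrib]
  have dsmul : ∀ k (r : ℝ) (y : Fin n → ℝ), d k (fun i => r * y i) = r * d k y := by
    intro k r y
    simp only [hd, Finset.mul_sum]
    exact Finset.sum_congr rfl fun i _ => by ring
  -- the one-variable specialization
  have hty : ∀ (t : ℝ) (y : Fin n → ℝ),
      t * Q y = ∑ k, c k * (α k * t + d k y) ^ 3 := by
    intro t y
    have := hid (Fin.cons t y)
    have h1 : (∑ i : Fin (n+1), if i = 0 then 0 else ε i * (Fin.cons t y : Fin (n+1) → ℝ) i ^ 2)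
        = Q y := by
      rw [Fin.sum_univ_succ]
      simp [Fin.succ_ne_zero, hQdef]
    have h2 : ∀ k, (∑ i, a k i * (Fin.cons t y : Fin (n+1) → ℝ) i) = α k * t + d k y := by
      intro k
      rw [Fin.sum_univ_succ]
      simp only [Fin.cons_zero, Fin.cons_succ, hα, hd, hm]
      try ring
    rw [h1] at this
    rw [Finset.sum_congr rfl (fun k _ => by rw [h2 k])] at this
    simpa using this
  -- generic expansion
  have expand : ∀ (p q : Fin s → ℝ) (t : ℝ),
      ∑ k, c k * (p k * t + q k) ^ 3
        = (∑ k, c k * p k ^ 3) * t ^ 3 + (∑ k, 3 * c k * p k ^ 2 * q k) * t ^ 2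
          + (∑ k, 3 * c k * p k * q k ^ 2) * t + ∑ k, c k * q k ^ 3 := by
    intro p q t
    rw [Finset.sum_mul, Finset.sum_mul, Finset.sum_mul, ← Finset.sum_add_distrib,
      ← Finset.sum_add_distrib, ← Finset.sum_add_distrib]
    exact Finset.sum_congr rfl fun k _ => by ring
  -- coefficient extraction from a cubic identity
  have extract : ∀ (A B Cc D E : ℝ),
      (∀ t : ℝ, t * E = A * t ^ 3 + B * t ^ 2 + Cc * t + D) → Cc = E ∧ D = 0 := by
    intro A B Cc D E hpoly
    have h0 := hpoly 0
    have h1 := hpoly 1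
    have h2 := hpoly (-1)
    have h3 := hpoly 2
    norm_num at h0 h1 h2 h3
    constructor <;> linarith
  have hcoeff : ∀ y : Fin n → ℝ,
      (∑ k, 3 * c k * α k * (d k y) ^ 2) = Q y ∧ (∑ k, c k * (d k y) ^ 3) = 0 := by
    intro y
    exact extract _ _ _ _ _ (fun t => by rw [hty t y, expand α (fun k => d k y) t])
  have hQ1 : ∀ y, (∑ k, 3 * c k * α k * (d k y) ^ 2) = Q y := fun y => (hcoeff y).1
  have hD : ∀ y, (∑ k, c k * (d k y) ^ 3) = 0 := fun y => (hcoeff y).2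
  have hCube : ∀ u y : Fin n → ℝ, (∑ k, 3 * c k * (d k u) * (d k y) ^ 2) = 0 := by
    intro u y
    have hpoly : ∀ t : ℝ, t * 0
        = (∑ k, c k * (d k u) ^ 3) * t ^ 3 + (∑ k, 3 * c k * (d k u) ^ 2 * (d k y)) * t ^ 2
          + (∑ k, 3 * c k * (d k u) * (d k y) ^ 2) * t + ∑ k, c k * (d k y) ^ 3 := by
      intro t
      have e2 : ∀ k : Fin s, d k (fun i => y i + t * u i) = d k u * t + d k y := by
        intro k
        have := dadd k y (fun i => t * u i)
        rw [dsmul k t u] at this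
        rw [this]
        ring
      have e3 : (∑ k, c k * (d k u * t + d k y) ^ 3) = 0 := by
        rw [Finset.sum_congr rfl (fun k _ => by rw [← e2 k])]
        exact hD _
      rw [← expand (fun k => d k u) (fun k => d k y) t, e3, mul_zero]
    exact (extract _ _ _ _ _ hpoly).1
  have hQ2 : ∀ y z : Fin n → ℝ, (∑ k, 3 * c k * α k * (d k y) * (d k z))
      = ∑ i : Fin n, ε i.succ * (y i * z i) := by
    intro y z
    have e1 := hQ1 (fun i => y i + z i)
    have eL : ∑ k, 3 * c k * α k * (d k (fun i => y i + z i)) ^ 2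
        = (∑ k, 3 * c k * α k * (d k y) ^ 2) + (∑ k, 3 * c k * α k * (d k z) ^ 2)
          + 2 * (∑ k, 3 * c k * α k * (d k y) * (d k z)) := by
      rw [← Finset.sum_add_distrib, Finset.mul_sum, ← Finset.sum_add_distrib]
      exact Finset.sum_congr rfl fun k _ => by rw [dadd]; ring
    have eR : Q (fun i => y i + z i)
        = Q y + Q z + 2 * (∑ i : Fin n, ε i.succ * (y i * z i)) := by
      simp only [hQdef]
      rw [← Finset.sum_add_distrib, Finset.mul_sum, ← Finset.sum_add_distrib]
      exact Finset.sum_congr rfl fun i _ => by ring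
    rw [eL, eR, hQ1 y, hQ1 z] at e1
    linarith
  -- the combinatorial endgame
  have dzero_of_m : ∀ k, m k = 0 → ∀ y, d k y = 0 := by
    intro k hk y
    simp [hd, hk]
  set K' : Finset (Fin s) := Finset.univ.filter (fun k => c k ≠ 0 ∧ m k ≠ 0) with hK'
  obtain ⟨u, hu⟩ := avoid n K' m (fun k hk => ((Finset.mem_filter.mp hk).2).2)
  have hdu : ∀ k ∈ K', d k u ≠ 0 := fun k hk => hu k hk
  set e : Fin s → ℝ := fun k => c k * d k u with he
  set P : Finset (Fin s) := K'.filter (fun k => 0 < e k) with hPdef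
  set N : Finset (Fin s) := K'.filter (fun k => e k < 0) with hNdef
  have hunion : P ∪ N = K' := by
    ext k
    simp only [hPdef, hNdef, Finset.mem_union, Finset.mem_filter]
    constructor
    · rintro (⟨h, _⟩ | ⟨h, _⟩) <;> exact h
    · intro hk
      have hek : e k ≠ 0 :=
        mul_ne_zero ((Finset.mem_filter.mp hk).2).1 (hdu k hk)
      rcases lt_or_gt_of_ne hek with h | h
      · exact Or.inr ⟨hk, h⟩
      · exact Or.inl ⟨hk, h⟩
  have hdisj : Disjoint P N := by
    rw [Finset.disjoint_left]
    intro k hkP hkN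
    have h1 := (Finset.mem_filter.mp hkP).2
    have h2 := (Finset.mem_filter.mp hkN).2
    linarith
  have hrel : ∀ y : Fin n → ℝ,
      (∑ k ∈ P, e k * (d k y) ^ 2) + (∑ k ∈ N, e k * (d k y) ^ 2) = 0 := by
    intro y
    rw [← Finset.sum_union hdisj, hunion]
    have h2 : (∑ k, e k * (d k y) ^ 2) = 0 := by
      have h3 : (3:ℝ) * ∑ k, e k * (d k y) ^ 2 = ∑ k, 3 * c k * (d k u) * (d k y) ^ 2 := by
        rw [Finset.mul_sum]
        exact Finset.sum_congr rfl fun k _ => by simp only [he]; ring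
      have h4 := hCube u y
      linarith
    rw [← h2]
    apply Finset.sum_subset (Finset.subset_univ K')
    intro k _ hk
    rw [hK'] at hk
    simp only [Finset.mem_filter, Finset.mem_univ, true_and, not_and, not_not] at hk
    by_cases hc : c k = 0
    · simp [he, hc]
    · rw [dzero_of_m k (hk hc) y]
      ring
  have hext : ∀ (S T : Finset (Fin s)) (σ : ℝ), S ∪ T = K' →
      (∀ y : Fin n → ℝ, (∑ k ∈ S, e k * (d k y) ^ 2) + (∑ k ∈ T, e k * (d k y) ^ 2) = 0) →
      (∀ k ∈ T, 0 < σ * e k) →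
      ∀ y : Fin n → ℝ, (∀ k ∈ S, d k y = 0) → ∀ k ∈ K', d k y = 0 := by
    intro S T σ hST hsum hTsign y hy
    have hSz : (∑ k ∈ S, e k * (d k y) ^ 2) = 0 :=
      Finset.sum_eq_zero fun k hk => by rw [hy k hk]; ring
    have hTz : (∑ k ∈ T, σ * e k * (d k y) ^ 2) = 0 := by
      have h6 := hsum y
      have h7 : (∑ k ∈ T, σ * e k * (d k y) ^ 2) = σ * ∑ k ∈ T, e k * (d k y) ^ 2 := by
        rw [Finset.mul_sum]
        exact Finset.sum_congr rfl fun k _ => by ring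
      rw [h7]
      have : (∑ k ∈ T, e k * (d k y) ^ 2) = 0 := by linarith
      rw [this, mul_zero]
    have hT0 : ∀ k ∈ T, d k y = 0 := by
      intro k hk
      have heach := (Finset.sum_eq_zero_iff_of_nonneg
        (fun j hj => mul_nonneg (le_of_lt (hTsign j hj)) (sq_nonneg _))).mp hTz k hk
      have h5 : (d k y) ^ 2 = 0 := by
        rcases mul_eq_zero.mp heach with h | h
        · exact absurd h (ne_of_gt (hTsign k hk))
        · exact h
      exact pow_eq_zero_iff (by norm_num) |>.mp h5
    intro k hk
    rw [← hST] at hk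
    rcases Finset.mem_union.mp hk with h | h
    · exact hy k h
    · exact hT0 k h
  have yzero : ∀ y : Fin n → ℝ, (∀ k ∈ K', d k y = 0) → y = 0 := by
    intro y hy
    have hz : ∀ z : Fin n → ℝ, (∑ i : Fin n, ε i.succ * (y i * z i)) = 0 := by
      intro z
      rw [← hQ2 y z]
      apply Finset.sum_eq_zero
      intro k _
      by_cases hk : k ∈ K'
      · rw [hy k hk]; ring
      · rw [hK'] at hk
        simp only [Finset.mem_filter, Finset.mem_univ, true_and, not_and, not_not] at hk
        by_cases hc : c k = 0
        · rw [hc]; ring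
        · rw [dzero_of_m k (hk hc) y]; ring
    have h4 : (∑ i : Fin n, y i ^ 2) = 0 := by
      rw [← hz (fun i => ε i.succ * y i)]
      apply Finset.sum_congr rfl
      intro i _
      rcases hε i.succ (Fin.succ_ne_zero i) with h | h <;> rw [h] <;> ring
    funext i
    have h8 := (Finset.sum_eq_zero_iff_of_nonneg
      (fun i _ => sq_nonneg (y i))).mp h4 i (Finset.mem_univ i)
    exact pow_eq_zero_iff (by norm_num) |>.mp h8
  have cardOf : ∀ (S : Finset (Fin s)), (∀ y : Fin n → ℝ, (∀ k ∈ S, d k y = 0) → y = 0) →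
      n ≤ S.card := by
    intro S hS
    let φ : (Fin n → ℝ) →ₗ[ℝ] (↑S → ℝ) :=
      { toFun := fun y k => d k.1 y
        map_add' := fun y z => funext fun k => dadd k.1 y z
        map_smul' := fun r y => funext fun k => dsmul k.1 r y }
    have hinj : Function.Injective φ := by
      rw [← LinearMap.ker_eq_bot, LinearMap.ker_eq_bot']
      intro y hy
      apply hS
      intro k hk
      exact congrFun hy ⟨k, hk⟩
    calc n = Module.finrank ℝ (Fin n → ℝ) := by
            rw [Module.finrank_pi]
            simp
      _ ≤ Module.finrank ℝ (↑S → ℝ) := LinearMap.finrank_le_finrank_of_injective hinj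
      _ = S.card := by
            rw [Module.finrank_pi]
            exact Fintype.card_coe S
  have c1 : n ≤ P.card := cardOf P fun y hy =>
    yzero y (hext P N (-1) hunion hrel
      (fun k hk => by have := (Finset.mem_filter.mp hk).2; linarith) y hy)
  have c2 : n ≤ N.card := cardOf N fun y hy =>
    yzero y (hext N P 1 (by rw [Finset.union_comm]; exact hunion)
      (fun y => by have := hrel y; linarith)
      (fun k hk => by have := (Finset.mem_filter.mp hk).2; linarith) y hy)
  calc 2 * n = n + n := two_mul n
    _ ≤ P.card + N.card := add_le_add c1 c2
    _ = (P ∪ N).card := (Finset.card_union_of_disjoint hdisj).symm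
    _ = K'.card := by rw [hunion]
    _ ≤ (Finset.univ : Finset (Fin s)).card := Finset.card_le_card (Finset.subset_univ K')
    _ = s := by simp

theorem stmt_15 (n : ℕ) (hn : 2 ≤ n) (ε : Fin (n + 1) → ℝ)
    (hε : ∀ i, i ≠ 0 → ε i = 1 ∨ ε i = -1)
    (F : MvPolynomial (Fin (n + 1)) ℝ)
    (hF : F = X 0 * ∑ i : Fin (n + 1), if i = 0 then 0 else C (ε i) * X i ^ 2) :
    (∃ (c : Fin (2 * n + 1) → ℝ) (L : Fin (2 * n + 1) → MvPolynomial (Fin (n + 1)) ℝ),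
      (∀ k, IsLinearForm (L k)) ∧ F = ∑ k, C (c k) * L k ^ 3) ∧
    (∀ (s : ℕ) (c : Fin s → ℝ) (L : Fin s → MvPolynomial (Fin (n + 1)) ℝ),
      (∀ k, IsLinearForm (L k)) → F = ∑ k, C (c k) * L k ^ 3 → 2 * n ≤ s) ∧
    ((∑ i ∈ Finset.univ.erase 0, ε i) = 0 →
      ∃ (c : Fin (2 * n) → ℝ) (L : Fin (2 * n) → MvPolynomial (Fin (n + 1)) ℝ),
        (∀ k, IsLinearForm (L k)) ∧ F = ∑ k, C (c k) * L k ^ 3) := by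
  refine ⟨by rw [hF]; exact part1 n ε, ?_, fun hS => by rw [hF]; exact part3 n ε hS⟩
  intro s c L hL hFd
  have a : ∀ k, ∃ ak : Fin (n+1) → ℝ, L k = ∑ i, C (ak i) * X i := hL
  choose a ha using a
  apply part2 n ε hε s c a
  intro x
  have hpoly : (X 0 * ∑ i : Fin (n + 1), if i = 0 then 0 else C (ε i) * X i ^ 2)
      = ∑ k, C (c k) * (∑ i, C (a k i) * X i) ^ 3 := by
    rw [← hF, hFd]
    exact Finset.sum_congr rfl fun k _ => by rw [ha k]
  have hev := congrArg (eval x) hpoly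
  simpa [apply_ite (eval x)] using hev
end

section
/- The real Waring rank of the cubic form x₀(x₀² + x₁² + … + xₙ²) ∈ ℝ[x₀,…,xₙ] is exactly 2n, i.e., it can be written as a sum of 2n terms ±L³ with real linear forms L, and no fewer. -/
open MvPolynomial

namespace W16

noncomputable section
open Finset

variable {m : ℕ}

def dot (a v : Fin m → ℝ) : ℝ := ∑ i, a i * v i

lemma dot_comm (a v : Fin m → ℝ) : dot a v = dot v a := by
  unfold dot; exact Finset.sum_congr rfl fun i _ => mul_comm _ _

lemma dot_add_right (a u v : Fin m → ℝ) : dot a (u + v) = dot a u + dot a v := by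
  unfold dot; rw [← Finset.sum_add_distrib]
  exact Finset.sum_congr rfl fun i _ => by simp [mul_add]

lemma dot_sub_right (a u v : Fin m → ℝ) : dot a (u - v) = dot a u - dot a v := by
  unfold dot; rw [← Finset.sum_sub_distrib]
  exact Finset.sum_congr rfl fun i _ => by simp [mul_sub]

lemma dot_smul_right (a : Fin m → ℝ) (c : ℝ) (v : Fin m → ℝ) :
    dot a (c • v) = c * dot a v := by
  unfold dot; rw [Finset.mul_sum]
  exact Finset.sum_congr rfl fun i _ => by simp; ring

lemma dot_single (a : Fin m → ℝ) (j : Fin m) : dot a (Pi.single j 1) = a j := by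
  unfold dot
  rw [Finset.sum_eq_single j] <;> simp +contextual [Pi.single_apply]

def dotL (a : Fin m → ℝ) : (Fin m → ℝ) →ₗ[ℝ] ℝ where
  toFun := dot a
  map_add' := dot_add_right a
  map_smul' c v := by simp [dot_smul_right]

@[simp] lemma dotL_apply (a v : Fin m → ℝ) : dotL a v = dot a v := rfl

lemma eval_linform {n : ℕ} (a : Fin (n+1) → ℝ) (v : Fin (n+1) → ℝ) :
    eval v (∑ i, C (a i) * X i) = dot a v := by
  simp [dot]

/-- polarization of the cubic `f v = v 0 * ‖v‖²`. -/
lemma f_polar {n : ℕ} (u v w : Fin (n+1) → ℝ) :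
    ((u+v+w) 0 * ∑ i, ((u+v+w) i)^2) - ((u+v) 0 * ∑ i, ((u+v) i)^2)
      - ((u+w) 0 * ∑ i, ((u+w) i)^2) - ((v+w) 0 * ∑ i, ((v+w) i)^2)
      + (u 0 * ∑ i, (u i)^2) + (v 0 * ∑ i, (v i)^2) + (w 0 * ∑ i, (w i)^2)
    = 2 * (u 0 * dot v w + v 0 * dot u w + w 0 * dot u v) := by
  simp only [dot, Pi.add_apply, Finset.mul_sum, ← Finset.sum_sub_distrib,
    ← Finset.sum_add_distrib, mul_add, add_mul]
  exact Finset.sum_congr rfl fun i _ => by ring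

lemma trilinear {n s : ℕ} (c : Fin s → ℝ) (a : Fin s → Fin (n+1) → ℝ)
    (hP : ∀ v : Fin (n+1) → ℝ, v 0 * ∑ i, (v i)^2 = ∑ k, c k * (dot (a k) v)^3) :
    ∀ u v w : Fin (n+1) → ℝ,
      u 0 * dot v w + v 0 * dot u w + w 0 * dot u v
        = 3 * ∑ k, c k * (dot (a k) u * (dot (a k) v * dot (a k) w)) := by
  intro u v w
  have key := f_polar u v w
  rw [hP (u+v+w), hP (u+v), hP (u+w), hP (v+w), hP u, hP v, hP w] at key
  simp only [dot_add_right, ← Finset.sum_sub_distrib, ← Finset.sum_add_distrib] at key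
  have : (∑ k, (c k * (dot (a k) u + dot (a k) v + dot (a k) w)^3
      - c k * (dot (a k) u + dot (a k) v)^3 - c k * (dot (a k) u + dot (a k) w)^3
      - c k * (dot (a k) v + dot (a k) w)^3 + c k * (dot (a k) u)^3
      + c k * (dot (a k) v)^3 + c k * (dot (a k) w)^3))
      = ∑ k, 6 * (c k * (dot (a k) u * (dot (a k) v * dot (a k) w))) :=
    Finset.sum_congr rfl fun k _ => by ring
  rw [this] at key
  rw [← Finset.mul_sum] at key
  linarith


/-- nondegeneracy: if all forms vanish on w then w = 0 -/
lemma H2 {n s : ℕ} (hn : 1 ≤ n) (c : Fin s → ℝ) (a : Fin s → Fin (n+1) → ℝ)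
    (hT : ∀ u v w : Fin (n+1) → ℝ,
      u 0 * dot v w + v 0 * dot u w + w 0 * dot u v
        = 3 * ∑ k, c k * (dot (a k) u * (dot (a k) v * dot (a k) w)))
    (w : Fin (n+1) → ℝ) (hw : ∀ k, dot (a k) w = 0) : w = 0 := by
  have h : ∀ x y : Fin (n+1) → ℝ,
      w 0 * dot x y + x 0 * dot w y + y 0 * dot w x = 0 := by
    intro x y
    have := hT w x y
    rw [Finset.sum_eq_zero (fun k _ => by rw [hw k]; ring)] at this
    linarith [this]
  have hw0 : w 0 = 0 := by
    have := h ((Pi.single ⟨1, by omega⟩ 1 : Fin (n+1) → ℝ)) ((Pi.single ⟨1, by omega⟩ 1 : Fin (n+1) → ℝ))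
    rw [dot_single, dot_single] at this
    simp only [Pi.single_apply, Fin.ext_iff, Fin.val_zero] at this
    norm_num at this
    linarith [this]
  funext j
  have := h ((Pi.single 0 1 : Fin (n+1) → ℝ)) ((Pi.single j 1 : Fin (n+1) → ℝ))
  rw [dot_single, dot_single, dot_single, hw0] at this
  simp only [mul_zero, zero_mul, zero_add, add_zero, Pi.single_eq_same, one_mul] at this
  simpa using this

/-- rank bound: for v with v 0 ≠ 0, at least n of the forms are nonzero at v -/
lemma H1 {n s : ℕ} (c : Fin s → ℝ) (a : Fin s → Fin (n+1) → ℝ)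
    (hT : ∀ u v w : Fin (n+1) → ℝ,
      u 0 * dot v w + v 0 * dot u w + w 0 * dot u v
        = 3 * ∑ k, c k * (dot (a k) u * (dot (a k) v * dot (a k) w)))
    (v : Fin (n+1) → ℝ) (hv0 : v 0 ≠ 0) :
    n ≤ (Finset.univ.filter (fun k => dot (a k) v ≠ 0)).card := by
  classical
  set e0 : Fin (n+1) → ℝ := Pi.single 0 1 with he0
  set G : (Fin (n+1) → ℝ) →ₗ[ℝ] (Fin (n+1) → ℝ) :=
    v 0 • LinearMap.id + (LinearMap.proj 0).smulRight v + (dotL v).smulRight e0 with hG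
  have hGapp : ∀ x, G x = v 0 • x + x 0 • v + dot v x • e0 := by
    intro x; simp [hG]
  -- G x is a combination of the a k with nonzero dot against v
  have hGx : ∀ x, G x = ∑ k, (3 * (c k * (dot (a k) v * dot (a k) x))) • a k := by
    intro x
    funext j
    have key := hT v x (Pi.single j 1)
    rw [dot_single x j, dot_single v j] at key
    have hsj : (Pi.single j 1 : Fin (n+1) → ℝ) 0 = e0 j := by
      rw [Pi.single_apply, he0, Pi.single_apply]
      by_cases hj : j = 0 <;> simp [hj, eq_comm]
    rw [hsj] at key
    have : G x j = v 0 * x j + x 0 * v j + dot v x * e0 j := by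
      rw [hGapp]; simp
    rw [this]
    rw [Finset.sum_apply]
    have : ∑ k, ((3 * (c k * (dot (a k) v * dot (a k) x))) • a k) j
        = 3 * ∑ k, c k * (dot (a k) v * (dot (a k) x * dot (a k) (Pi.single j 1))) := by
      rw [Finset.mul_sum]
      refine Finset.sum_congr rfl fun k _ => ?_
      rw [dot_single]; simp; ring
    rw [this, ← key]; ring
  set T : Finset (Fin s) := Finset.univ.filter (fun k => dot (a k) v ≠ 0) with hT'
  -- range ≤ span of the a k, k ∈ T
  have hrange : LinearMap.range G ≤ Submodule.span ℝ (↑(T.image a) : Set (Fin (n+1) → ℝ)) := by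
    rintro y ⟨x, rfl⟩
    rw [hGx]
    refine Submodule.sum_mem _ fun k _ => ?_
    by_cases hk : dot (a k) v = 0
    · simp [hk]
    · exact Submodule.smul_mem _ _
        (Submodule.subset_span (by simp [hT']; exact ⟨k, hk, rfl⟩))
  have hrk1 : Module.finrank ℝ (LinearMap.range G) ≤ T.card := by
    calc Module.finrank ℝ (LinearMap.range G)
        ≤ Module.finrank ℝ (Submodule.span ℝ (↑(T.image a) : Set (Fin (n+1) → ℝ))) :=
          Submodule.finrank_mono hrange
      _ ≤ (T.image a).card := finrank_span_finset_le_card _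
      _ ≤ T.card := Finset.card_image_le
  have hker : Module.finrank ℝ (LinearMap.ker G) ≤ 1 := by
    by_contra hk
    push_neg at hk
    have hk2 : 2 ≤ Module.finrank ℝ (LinearMap.ker G) := hk
    have hle : LinearMap.ker G ≤ Submodule.span ℝ ({v, e0} : Set (Fin (n+1) → ℝ)) := by
      intro x hx
      have hx0 : G x = 0 := hx
      rw [hGapp] at hx0
      refine Submodule.mem_span_pair.mpr ⟨-(x 0) / v 0, -(dot v x) / v 0, ?_⟩
      funext j
      have hj := congrFun hx0 j
      simp only [Pi.add_apply, Pi.smul_apply, smul_eq_mul, Pi.zero_apply] at hj ⊢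
      have hj' : (v 0 * x j + x 0 * v j + dot v x * e0 j) * v 0 = 0 := by rw [hj]; ring
      field_simp
      linarith [hj']
    have hsp : Module.finrank ℝ (Submodule.span ℝ ({v, e0} : Set (Fin (n+1) → ℝ))) ≤ 2 := by
      refine le_trans (finrank_span_le_card _) ?_
      rw [Set.toFinset_insert, Set.toFinset_singleton]
      exact (Finset.card_insert_le _ _).trans (by simp)
    have heq : LinearMap.ker G = Submodule.span ℝ ({v, e0} : Set (Fin (n+1) → ℝ)) :=
      Submodule.eq_of_le_of_finrank_le hle (hsp.trans hk2)
    have he0mem : e0 ∈ LinearMap.ker G := by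
      rw [heq]
      exact Submodule.subset_span (by simp)
    have hzero : G e0 = 0 := he0mem
    rw [hGapp] at hzero
    have h0 := congrFun hzero 0
    have hde : dot v e0 = v 0 := dot_single v 0
    rw [hde] at h0
    simp only [Pi.add_apply, Pi.smul_apply, smul_eq_mul, Pi.zero_apply, he0,
      Pi.single_eq_same] at h0
    exact hv0 (by linarith [h0])
  have hrn := LinearMap.finrank_range_add_finrank_ker G
  rw [Module.finrank_pi, Fintype.card_fin] at hrn
  omega


lemma lower {n s : ℕ} (hn : 1 ≤ n) (c : Fin s → ℝ) (a : Fin s → Fin (n+1) → ℝ)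
    (hP : ∀ v : Fin (n+1) → ℝ, v 0 * ∑ i, (v i)^2 = ∑ k, c k * (dot (a k) v)^3) :
    2 * n ≤ s := by
  classical
  by_contra hs
  push_neg at hs
  have hT := trilinear c a hP
  let P : Finset (Fin s) → Prop :=
    fun S => ∃ v : Fin (n+1) → ℝ, (∀ k ∈ S, dot (a k) v = 0) ∧ v 0 ≠ 0
  have hPempty : P ∅ := ⟨(Pi.single 0 1 : Fin (n+1) → ℝ), by simp, by simp⟩
  obtain ⟨S, hSmem, hmax⟩ := Finset.exists_max_image (Finset.univ.filter P) Finset.card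
    ⟨∅, Finset.mem_filter.mpr ⟨Finset.mem_univ _, hPempty⟩⟩
  obtain ⟨v, hvS, hv0⟩ := (Finset.mem_filter.mp hSmem).2
  have hcT := H1 c a hT v hv0
  set T := Finset.univ.filter (fun k => dot (a k) v ≠ 0) with hTdef
  have hdisj : Disjoint T S := by
    rw [Finset.disjoint_left]; intro k hk hkS
    exact (Finset.mem_filter.mp hk).2 (hvS k hkS)
  have hcard : T.card + S.card ≤ s := by
    rw [← Finset.card_union_of_disjoint hdisj]
    exact le_trans (Finset.card_le_card (Finset.subset_univ _)) (by simp)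
  have hScard : S.card + 1 ≤ n := by omega
  have hB : ∀ k, ∀ z : Fin (n+1) → ℝ,
      (∀ j ∈ S, dot (a j) z = 0) → z 0 = 0 → dot (a k) z = 0 := by
    intro k z hz hz0
    by_cases hkS : k ∈ S
    · exact hz k hkS
    by_contra hne
    have hins : P (insert k S) := by
      refine ⟨v - (dot (a k) v / dot (a k) z) • z, ?_, ?_⟩
      · intro j hj
        rw [dot_sub_right, dot_smul_right]
        rcases Finset.mem_insert.mp hj with rfl | hjS
        · rw [div_mul_cancel₀ _ hne]; ring
        · rw [hz j hjS, hvS j hjS]; ring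
      · simp only [Pi.sub_apply, Pi.smul_apply, smul_eq_mul, hz0, mul_zero, sub_zero]
        exact hv0
    have := hmax (insert k S) (Finset.mem_filter.mpr ⟨Finset.mem_univ _, hins⟩)
    rw [Finset.card_insert_of_notMem hkS] at this
    omega
  let Φ : (Fin (n+1) → ℝ) →ₗ[ℝ] ({ x // x ∈ S } → ℝ) × ℝ :=
    LinearMap.prod (LinearMap.pi fun j => dotL (a j.1)) (LinearMap.proj 0)
  have hΦ : ¬ Function.Injective Φ := by
    intro hinj
    have hfr := LinearMap.finrank_le_finrank_of_injective hinj
    simp only [Module.finrank_prod, Module.finrank_pi, Module.finrank_self,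
      Fintype.card_fin, Fintype.card_coe] at hfr
    omega
  rw [← LinearMap.ker_eq_bot] at hΦ
  obtain ⟨w, hwker, hwne⟩ := (Submodule.ne_bot_iff _).mp hΦ
  have hw0 : Φ w = 0 := LinearMap.mem_ker.mp hwker
  rw [Prod.ext_iff] at hw0
  have hwS : ∀ j ∈ S, dot (a j) w = 0 := by
    intro j hj
    have := congrFun hw0.1 ⟨j, hj⟩
    simpa [Φ] using this
  have hw00 : w 0 = 0 := by simpa [Φ] using hw0.2
  exact hwne (H2 hn c a hT w (fun k => hB k w hwS hw00))


lemma upper {n : ℕ} (hn : 1 ≤ n) :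
    ∃ (c : Fin (2 * n) → ℝ) (a : Fin (2 * n) → Fin (n + 1) → ℝ),
      (∀ k, c k = 1 ∨ c k = -1) ∧
      ∀ v : Fin (n + 1) → ℝ, v 0 * ∑ i, (v i) ^ 2 = ∑ k, c k * (dot (a k) v) ^ 3 := by
  classical
  have hn0 : (0:ℝ) < (n:ℝ) := by exact_mod_cast hn
  set d : ℝ := (2 * (n:ℝ)) ^ (-(1:ℝ)/3) with hd
  have hdpos : 0 < d := Real.rpow_pos_of_pos (by linarith) _
  have hd3 : d ^ 3 = 1 / (2 * (n:ℝ)) := by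
    rw [hd, ← Real.rpow_natCast ((2 * (n:ℝ)) ^ (-(1:ℝ)/3)) 3, ← Real.rpow_mul (by linarith)]
    have h31 : (-(1:ℝ)/3) * (3:ℕ) = -1 := by norm_num
    rw [h31, Real.rpow_neg_one, one_div]
  set b : ℝ := Real.sqrt (1 / (6 * d)) with hb
  have hb2 : b ^ 2 = 1 / (6 * d) := Real.sq_sqrt (by positivity)
  refine ⟨fun k => if (k:ℕ) < n then 1 else -1,
    fun k j => if j = 0 then (if (k:ℕ) < n then d else -d)
      else if (j:ℕ) = (k:ℕ) % n + 1 then b else 0,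
    fun k => by by_cases h : (k:ℕ) < n <;> simp [h], ?_⟩
  intro v
  -- compute the dot products
  have hmod : ∀ k : Fin (2*n), (k:ℕ) % n < n := fun k => Nat.mod_lt _ (by omega)
  have hdot : ∀ k : Fin (2*n),
      dot (fun j => if j = 0 then (if (k:ℕ) < n then d else -d)
        else if (j:ℕ) = (k:ℕ) % n + 1 then b else 0) v
      = (if (k:ℕ) < n then d else -d) * v 0 + b * v ⟨(k:ℕ) % n + 1, by have := Nat.mod_lt (k:ℕ) (show 0 < n by omega); omega⟩ := by
    intro k
    set i0 : Fin (n+1) := ⟨(k:ℕ) % n + 1, by have := hmod k; omega⟩ with hi0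
    have hi00 : i0 ≠ 0 := by
      simp [hi0, Fin.ext_iff]
    unfold dot
    have hterm : ∀ j : Fin (n+1),
        (if j = 0 then (if (k:ℕ) < n then d else -d)
          else if (j:ℕ) = (k:ℕ) % n + 1 then b else 0) * v j
        = (if j = 0 then (if (k:ℕ) < n then d else -d) * v j else 0)
          + (if j = i0 then b * v j else 0) := by
      intro j
      by_cases hj0 : j = 0
      · subst hj0
        simp [hi00.symm, Ne.symm hi00]
      · by_cases hji : j = i0
        · subst hji
          simp [hj0, hi0]
        · have : (j:ℕ) ≠ (k:ℕ) % n + 1 := by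
            intro hval
            exact hji (by rw [Fin.ext_iff, hval, hi0])
          simp [hj0, hji, this]
    rw [Finset.sum_congr rfl fun j _ => hterm j, Finset.sum_add_distrib,
      Finset.sum_ite_eq' Finset.univ (0 : Fin (n+1)),
      Finset.sum_ite_eq' Finset.univ i0]
    simp
  simp only [hdot]
  -- reindex the sum over Fin (2n) by Fin n × Bool
  have hcard : Fintype.card (Fin n × Bool) = Fintype.card (Fin (2*n)) := by
    simp [Fintype.card_prod]
    omega
  let f : Fin n × Bool → Fin (2*n) := fun p =>
    ⟨(p.1 : ℕ) + (if p.2 then n else 0), by rcases p with ⟨i, b⟩; have := i.isLt; cases b <;> simp <;> omega⟩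
  have hinj : Function.Injective f := by
    rintro ⟨i, bi⟩ ⟨j, bj⟩ h
    have hval : (i:ℕ) + (if bi then n else 0) = (j:ℕ) + (if bj then n else 0) :=
      congrArg Fin.val h
    have hi := i.isLt; have hj := j.isLt
    cases bi <;> cases bj <;> simp at hval <;>
      · refine Prod.ext (Fin.ext ?_) ?_ <;> simp <;> omega
  have hbij : Function.Bijective f :=
    (Fintype.bijective_iff_injective_and_card f).mpr ⟨hinj, hcard⟩
  rw [← Fintype.sum_bijective f hbij _ _ (fun p => rfl)]
  rw [Fintype.sum_prod_type]
  -- per-index computation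
  have hstep : ∀ i : Fin n,
      (∑ y : Bool, (if ((f (i, y) : ℕ) < n) then (1:ℝ) else -1) *
        ((if ((f (i, y) : ℕ) < n) then d else -d) * v 0
          + b * v ⟨(f (i, y) : ℕ) % n + 1, by have := hmod (f (i,y)); omega⟩) ^ 3)
      = (v 0)^3 * (1/(n:ℝ)) + v 0 * (v i.succ)^2 := by
    intro i
    have hilt := i.isLt
    have hvf : ((f (i, false) : ℕ)) = (i:ℕ) := by simp [f]
    have hvt : ((f (i, true) : ℕ)) = (i:ℕ) + n := by simp [f]
    have hmf : ((f (i, false) : ℕ)) % n = (i:ℕ) := by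
      rw [hvf]; exact Nat.mod_eq_of_lt hilt
    have hmt : ((f (i, true) : ℕ)) % n = (i:ℕ) := by
      rw [hvt, Nat.add_mod_right]; exact Nat.mod_eq_of_lt hilt
    have hlf : ((f (i, false) : ℕ)) < n := by omega
    have hlt : ¬ ((f (i, true) : ℕ)) < n := by omega
    rw [Fintype.sum_bool]
    have hsucc : ∀ (y : Bool), (⟨(f (i, y) : ℕ) % n + 1, by have := hmod (f (i,y)); omega⟩ : Fin (n+1)) = i.succ := by
      intro y
      cases y
      · rw [Fin.ext_iff]
        show (f (i, false) : ℕ) % n + 1 = _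
        rw [hmf, Fin.val_succ]
      · rw [Fin.ext_iff]
        show (f (i, true) : ℕ) % n + 1 = _
        rw [hmt, Fin.val_succ]
    rw [hsucc true, hsucc false]
    rw [if_pos hlf, if_pos hlf, if_neg hlt, if_neg hlt]
    have h2 : (-1:ℝ) * (-d * v 0 + b * v i.succ)^3 + 1 * (d * v 0 + b * v i.succ)^3
        = 2*d^3*(v 0)^3 + 6*(b^2)*d*(v 0)*(v i.succ)^2 := by ring
    rw [h2, hd3, hb2]
    have hdne : d ≠ 0 := ne_of_gt hdpos
    have hnne : (n:ℝ) ≠ 0 := ne_of_gt hn0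
    field_simp
  rw [Finset.sum_congr rfl fun i _ => hstep i]
  rw [Finset.sum_add_distrib, Finset.sum_const, Finset.card_univ, Fintype.card_fin,
    ← Finset.mul_sum]
  rw [Fin.sum_univ_succ (fun j => (v j)^2)]
  field_simp
  have hnc : (n:ℝ) * (v 0 ^ 3 / n) = v 0 ^ 3 := by
    rw [mul_comm]; exact div_mul_cancel₀ _ hn0.ne'
  rw [nsmul_eq_mul, hnc]
  ring

end
end W16


theorem stmt_16 (n : ℕ) (hn : 1 ≤ n)
    (F : MvPolynomial (Fin (n + 1)) ℝ)
    (hF : F = X 0 * ∑ i, X i ^ 2) :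
    (∃ (c : Fin (2 * n) → ℝ) (L : Fin (2 * n) → MvPolynomial (Fin (n + 1)) ℝ),
      (∀ k, c k = 1 ∨ c k = -1) ∧ (∀ k, IsLinearForm (L k)) ∧
      F = ∑ k, C (c k) * L k ^ 3) ∧
    (∀ (s : ℕ) (c : Fin s → ℝ) (L : Fin s → MvPolynomial (Fin (n + 1)) ℝ),
      (∀ k, c k = 1 ∨ c k = -1) → (∀ k, IsLinearForm (L k)) →
      F = ∑ k, C (c k) * L k ^ 3 → 2 * n ≤ s) := by
  have heval : ∀ (v : Fin (n+1) → ℝ),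
      eval v (X 0 * ∑ i, X i ^ 2 : MvPolynomial (Fin (n+1)) ℝ) = v 0 * ∑ i, (v i) ^ 2 := by
    intro v; simp
  constructor
  · obtain ⟨c, a, hc, hid⟩ := W16.upper hn
    refine ⟨c, fun k => ∑ i, C (a k i) * X i, hc, fun k => ⟨a k, rfl⟩, ?_⟩
    apply MvPolynomial.funext
    intro v
    rw [hF, heval, map_sum]
    rw [Finset.sum_congr rfl fun (k : Fin (2*n)) _ => by
      rw [eval_mul, eval_C, eval_pow, W16.eval_linform]]
    exact hid v
  · intro s c L hc hL hFeq
    choose a ha using hL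
    apply W16.lower hn c a
    intro v
    have h2 : eval v F = ∑ k, c k * (W16.dot (a k) v) ^ 3 := by
      rw [hFeq, map_sum]
      refine Finset.sum_congr rfl fun k _ => ?_
      rw [eval_mul, eval_C, eval_pow, ha k, W16.eval_linform]
    rw [← heval v, ← hF]
    exact h2
end

section
/- Let F = x₀(x₀² − x₁² − … − xₙ²) ∈ ℝ[x₀,…,xₙ] with n ≥ 1. For all real λ₁,…,λₙ, the quadratic form ∂F/∂x₀ + Σ_{i=1}^n λ_i ∂F/∂x_i has full rank n+1; consequently (via the lower-bound criterion) rk_ℝ(F) ≥ 2n+1, and combined with the upper bound rk_ℝ(F) = 2n+1. -/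
open MvPolynomial

/-- The symmetric Gram matrix associated to a quadratic form `Q` in `n + 1` variables. -/
noncomputable def gramMatrix (n : ℕ) (Q : MvPolynomial (Fin (n + 1)) ℝ) :
    Matrix (Fin (n + 1)) (Fin (n + 1)) ℝ :=
  Matrix.of fun i j =>
    if i = j then coeff (Finsupp.single i 2) Q
    else coeff (Finsupp.single i 1 + Finsupp.single j 1) Q / 2

namespace Stmt17Aux

variable {n : ℕ}

/-- The linear form with coefficient vector `a`. -/
noncomputable def lin (a : Fin (n + 1) → ℝ) : MvPolynomial (Fin (n + 1)) ℝ :=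
  ∑ i, C (a i) * X i

/-- The pairing `a 0 + ∑ lam k * a k.succ`. -/
def pair (lam : Fin n → ℝ) (a : Fin (n + 1) → ℝ) : ℝ :=
  a 0 + ∑ k : Fin n, lam k * a k.succ

lemma isLinearForm_lin (a : Fin (n + 1) → ℝ) : IsLinearForm (lin a) := ⟨a, rfl⟩

lemma gram_add (P Q : MvPolynomial (Fin (n + 1)) ℝ) :
    gramMatrix n (P + Q) = gramMatrix n P + gramMatrix n Q := by
  funext i j
  simp only [gramMatrix, Matrix.of_apply, coeff_add, Matrix.add_apply]
  split <;> ring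

lemma gram_zero : gramMatrix n (0 : MvPolynomial (Fin (n + 1)) ℝ) = 0 := by
  funext i j
  simp only [gramMatrix, Matrix.of_apply, coeff_zero, Matrix.zero_apply]
  split <;> simp

lemma gram_Cmul (r : ℝ) (Q : MvPolynomial (Fin (n + 1)) ℝ) :
    gramMatrix n (C r * Q) = r • gramMatrix n Q := by
  funext i j
  simp only [gramMatrix, Matrix.of_apply, coeff_C_mul, Matrix.smul_apply, smul_eq_mul]
  split <;> ring

lemma gram_sum {ι : Type*} (s : Finset ι) (f : ι → MvPolynomial (Fin (n + 1)) ℝ) :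
    gramMatrix n (∑ k ∈ s, f k) = ∑ k ∈ s, gramMatrix n (f k) := by
  classical
  induction s using Finset.cons_induction with
  | empty => simpa using gram_zero
  | cons k s hk ih => rw [Finset.sum_cons, gram_add, ih, Finset.sum_cons]

lemma sq_lin (a : Fin (n + 1) → ℝ) :
    (lin a) ^ 2 = ∑ p, ∑ q, C (a p * a q) *
      monomial (Finsupp.single p 1 + Finsupp.single q 1) (1 : ℝ) := by
  rw [sq, lin, Finset.sum_mul_sum]
  refine Finset.sum_congr rfl fun p _ => Finset.sum_congr rfl fun q _ => ?_
  rw [X, X, map_mul, show C (a p) * monomial (Finsupp.single p 1) 1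
      * (C (a q) * monomial (Finsupp.single q 1) 1)
      = C (a p) * C (a q) * (monomial (Finsupp.single p 1) 1 * monomial (Finsupp.single q 1) 1)
      by ring, monomial_mul, mul_one]

lemma single_pair_eq {N : Type*} (p q i j : N) :
    (Finsupp.single p (1:ℕ) + Finsupp.single q 1 = Finsupp.single i 1 + Finsupp.single j 1)
      ↔ (p = i ∧ q = j) ∨ (p = j ∧ q = i) := by
  rw [Finsupp.single_add_single_eq_single_add_single (by norm_num) (by norm_num)]
  simp

lemma double_sum_ite (a : Fin (n + 1) → ℝ) (i0 j0 : Fin (n + 1)) :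
    (∑ p, ∑ q, if p = i0 ∧ q = j0 then a p * a q else 0) = a i0 * a j0 := by
  rw [Finset.sum_eq_single i0]
  · rw [Finset.sum_eq_single j0]
    · simp
    · intro b _ hb; simp [hb]
    · simp
  · intro b _ hb
    exact Finset.sum_eq_zero fun q _ => by simp [hb]
  · simp

lemma gram_sq (a : Fin (n + 1) → ℝ) :
    gramMatrix n ((lin a) ^ 2) = Matrix.vecMulVec a a := by
  funext i j
  rw [gramMatrix, Matrix.of_apply, Matrix.vecMulVec_apply, sq_lin]
  simp only [coeff_sum, coeff_C_mul, coeff_monomial, mul_ite, mul_one, mul_zero]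
  split
  · next h =>
    subst h
    have h2 : (Finsupp.single i 2 : Fin (n+1) →₀ ℕ) = Finsupp.single i 1 + Finsupp.single i 1 := by
      rw [← Finsupp.single_add]
    simp only [h2, single_pair_eq, and_self, or_self]
    exact double_sum_ite a i i
  · next h =>
    simp only [single_pair_eq]
    have key : ∀ p q : Fin (n+1), (if (p = i ∧ q = j) ∨ (p = j ∧ q = i) then a p * a q else 0)
        = (if p = i ∧ q = j then a p * a q else 0) + (if p = j ∧ q = i then a p * a q else 0) := by
      intro p q
      by_cases h1 : p = i ∧ q = j <;> by_cases h2 : p = j ∧ q = i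
      · exact absurd (h1.1.symm.trans h2.1) h
      · simp [h1, h2, h]
      · simp [h1, h2, h]
      · simp [h1, h2]
    simp only [key, Finset.sum_add_distrib, double_sum_ite]
    ring

lemma pderiv_lin (j : Fin (n + 1)) (a : Fin (n + 1) → ℝ) :
    pderiv j (lin a) = C (a j) := by
  classical
  simp only [lin, map_sum, pderiv_C_mul, pderiv_X]
  rw [Finset.sum_eq_single j]
  · simp
  · intro b _ hb
    simp [Pi.single_apply, hb.symm]
  · simp

lemma pderiv_cube (j : Fin (n + 1)) (a : Fin (n + 1) → ℝ) :
    pderiv j ((lin a) ^ 3) = C (3 * a j) * (lin a) ^ 2 := by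
  rw [pderiv_pow, pderiv_lin, map_mul, map_ofNat]
  norm_num
  ring

lemma deriv_decomp {ι : Type*} [Fintype ι] (c : ι → ℝ) (a : ι → Fin (n + 1) → ℝ)
    (lam : Fin n → ℝ) :
    pderiv 0 (∑ k, C (c k) * (lin (a k)) ^ 3)
        + ∑ p : Fin n, C (lam p) * pderiv p.succ (∑ k, C (c k) * (lin (a k)) ^ 3)
      = ∑ k, C (3 * c k * pair lam (a k)) * (lin (a k)) ^ 2 := by
  simp only [map_sum, pderiv_C_mul, pderiv_cube, Finset.mul_sum]
  rw [Finset.sum_comm, ← Finset.sum_add_distrib]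
  refine Finset.sum_congr rfl fun k _ => ?_
  have hc : (3 : ℝ) * c k * pair lam (a k)
      = c k * (3 * a k 0) + ∑ p : Fin n, lam p * (c k * (3 * a k p.succ)) := by
    rw [pair, mul_add, Finset.mul_sum]
    exact congrArg₂ (·+·) (by ring) (Finset.sum_congr rfl fun p _ => by ring)
  rw [hc, map_add, map_sum, add_mul, Finset.sum_mul]
  simp only [map_mul]
  exact congrArg₂ (·+·) (by ring) (Finset.sum_congr rfl fun p _ => by ring)

/-- Gram matrix of the directional derivative of a sum of cubes of linear forms. -/
lemma gram_deriv {ι : Type*} [Fintype ι] (c : ι → ℝ) (a : ι → Fin (n + 1) → ℝ)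
    (lam : Fin n → ℝ) :
    gramMatrix n (pderiv 0 (∑ k, C (c k) * (lin (a k)) ^ 3)
        + ∑ p : Fin n, C (lam p) * pderiv p.succ (∑ k, C (c k) * (lin (a k)) ^ 3))
      = ∑ k, (3 * c k * pair lam (a k)) • Matrix.vecMulVec (a k) (a k) := by
  rw [deriv_decomp, gram_sum]
  exact Finset.sum_congr rfl fun k _ => by rw [gram_Cmul, gram_sq]

/-! ### The explicit decomposition of `F` -/

/-- index type for the explicit decomposition. -/
abbrev Idx (n : ℕ) := Fin 1 ⊕ (Fin n ⊕ Fin n)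

def idxEquiv (n : ℕ) : Idx n ≃ Fin (2 * n + 1) :=
  ((Equiv.refl (Fin 1)).sumCongr finSumFinEquiv).trans
    (finSumFinEquiv.trans (finCongr (by omega)))

noncomputable def e₀ : Fin (n + 1) → ℝ := Pi.single 0 1

noncomputable def aa : Idx n → (Fin (n + 1) → ℝ) :=
  Sum.elim (fun _ => e₀)
    (Sum.elim (fun j => e₀ + Pi.single j.succ 1) (fun j => e₀ - Pi.single j.succ 1))

noncomputable def cc (n : ℕ) : Idx n → ℝ :=
  Sum.elim (fun _ => 1 + (n : ℝ) / 3) (Sum.elim (fun _ => -(1/6)) (fun _ => -(1/6)))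

lemma lin_single (i0 : Fin (n + 1)) : lin (Pi.single i0 1) = X i0 := by
  rw [lin, Finset.sum_eq_single i0]
  · simp
  · intro b _ hb; simp [Pi.single_apply, hb]
  · simp

lemma lin_add (a b : Fin (n + 1) → ℝ) : lin (a + b) = lin a + lin b := by
  rw [lin, lin, lin, ← Finset.sum_add_distrib]
  refine Finset.sum_congr rfl fun i _ => ?_
  simp [map_add, add_mul]

lemma lin_sub (a b : Fin (n + 1) → ℝ) : lin (a - b) = lin a - lin b := by
  rw [lin, lin, lin, ← Finset.sum_sub_distrib]
  refine Finset.sum_congr rfl fun i _ => ?_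
  simp [map_sub, sub_mul]

lemma key (n : ℕ) (j : Fin n) :
    (C (-(1/6):ℝ) * (X 0 + X j.succ) ^ 3 + C (-(1/6):ℝ) * (X 0 - X j.succ) ^ 3
      : MvPolynomial (Fin (n+1)) ℝ)
    = C (-(1/3):ℝ) * X 0 ^ 3 - X 0 * X j.succ ^ 2 := by
  have h2 : (C (-(1/6):ℝ) : MvPolynomial (Fin (n+1)) ℝ) * 2 = C (-(1/3):ℝ) := by
    rw [show (2 : MvPolynomial (Fin (n+1)) ℝ) = C (2:ℝ) from (map_ofNat C 2).symm, ← map_mul]; norm_num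
  have h6 : (C (-(1/6):ℝ) : MvPolynomial (Fin (n+1)) ℝ) * 6 = -1 := by
    rw [show (6 : MvPolynomial (Fin (n+1)) ℝ) = C (6:ℝ) from (map_ofNat C 6).symm, ← map_mul]; norm_num
  calc C (-(1/6):ℝ) * (X 0 + X j.succ) ^ 3 + C (-(1/6):ℝ) * (X 0 - X j.succ) ^ 3
      = (C (-(1/6):ℝ) * 2) * X 0 ^ 3
        + (C (-(1/6):ℝ) * 6) * (X 0 * X j.succ ^ 2) := by ring
    _ = _ := by rw [h2, h6]; ring

lemma hFdecomp (n : ℕ) :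
    (X 0 * (X 0 ^ 2 - ∑ i : Fin (n + 1), if i = 0 then 0 else X i ^ 2)
      : MvPolynomial (Fin (n + 1)) ℝ)
      = ∑ k : Idx n, C (cc n k) * (lin (aa k)) ^ 3 := by
  have hL : (∑ i : Fin (n + 1), if i = 0 then 0 else X i ^ 2 : MvPolynomial (Fin (n+1)) ℝ)
      = ∑ j : Fin n, X j.succ ^ 2 := by
    rw [Fin.sum_univ_succ]
    simp [Fin.succ_ne_zero]
  rw [hL]
  rw [Fintype.sum_sum_type, Fintype.sum_sum_type]
  simp only [aa, cc, Sum.elim_inl, Sum.elim_inr, lin_add, lin_sub, lin_single, e₀]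
  rw [Fin.sum_univ_one, ← Finset.sum_add_distrib]
  simp only [key]
  rw [Finset.sum_sub_distrib, Finset.sum_const, Finset.card_univ, Fintype.card_fin]
  rw [nsmul_eq_mul]
  rw [show ((n : MvPolynomial (Fin (n+1)) ℝ)) = C (n : ℝ) from (map_natCast C n).symm]
  have hconst : (1 + (n:ℝ)/3) + (n:ℝ) * (-(1/3)) = 1 := by ring
  rw [mul_sub]
  rw [show (C (1 + (n:ℝ)/3) * X 0 ^ 3 + (C ((n:ℝ)) * (C (-(1/3)) * X 0 ^ 3) - ∑ j : Fin n, X 0 * X j.succ ^ 2)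
      : MvPolynomial (Fin (n+1)) ℝ)
      = (C (1 + (n:ℝ)/3) + C ((n:ℝ)) * C (-(1/3))) * X 0 ^ 3 - ∑ j : Fin n, X 0 * X j.succ ^ 2 by ring]
  rw [← map_mul, ← map_add, hconst, map_one, one_mul, Finset.mul_sum]
  ring


/-! ### The explicit Gram matrix and its rank -/

def Mexp (lam : Fin n → ℝ) : Matrix (Fin (n + 1)) (Fin (n + 1)) ℝ :=
  Matrix.of fun i j =>
    if i = 0 ∧ j = 0 then 3
    else if i = 0 then -(Fin.cases 0 lam j)
    else if j = 0 then -(Fin.cases 0 lam i)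
    else if i = j then -1 else 0

lemma Mexp_rank (lam : Fin n → ℝ) : (Mexp lam).rank = n + 1 := by
  have hker : ∀ x : Fin (n + 1) → ℝ, (Mexp lam).mulVec x = 0 → x = 0 := by
    intro x hx
    have h0 : (3 : ℝ) * x 0 + ∑ p : Fin n, -(lam p) * x p.succ = 0 := by
      have := congrFun hx 0
      simp only [Matrix.mulVec, dotProduct, Pi.zero_apply] at this
      rw [← this, Fin.sum_univ_succ]
      simp [Mexp, Fin.succ_ne_zero]
    have hs : ∀ p : Fin n, -(lam p) * x 0 - x p.succ = 0 := by
      intro p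
      have := congrFun hx p.succ
      simp only [Matrix.mulVec, dotProduct, Pi.zero_apply] at this
      rw [← this, Fin.sum_univ_succ]
      simp only [Mexp, Matrix.of_apply, Fin.succ_ne_zero, false_and, if_false]
      rw [Finset.sum_eq_single p]
      · simp [Fin.cases_succ, Fin.succ_ne_zero]; ring
      · intro b _ hb
        simp [Fin.succ_ne_zero, (Fin.succ_inj.not.2 (Ne.symm hb) : ¬ (p.succ = b.succ))]
      · simp
    have hxs : ∀ p : Fin n, x p.succ = -(lam p) * x 0 := fun p => by linarith [hs p]
    have hx0 : x 0 = 0 := by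
      have hT : ∑ p : Fin n, -(lam p) * x p.succ = (∑ p : Fin n, lam p ^ 2) * x 0 := by
        rw [Finset.sum_mul]
        exact Finset.sum_congr rfl fun p _ => by rw [hxs p]; ring
      have hsum : (3 + ∑ p : Fin n, lam p ^ 2) * x 0 = 0 := by
        rw [add_mul]; linarith [h0, hT]
      have hpos : (3 + ∑ p : Fin n, lam p ^ 2) > 0 := by positivity
      exact (mul_eq_zero.1 hsum).elim (fun h => absurd h (ne_of_gt hpos)) id
    funext i
    refine Fin.cases ?_ ?_ i
    · exact hx0
    · intro p
      have := hs p
      rw [hx0] at this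
      simpa using this.symm
  have hinj : Function.Injective (Mexp lam).mulVec := by
    intro x y hxy
    have : (Mexp lam).mulVec (x - y) = 0 := by
      rw [Matrix.mulVec_sub, hxy, sub_self]
    have := hker _ this
    exact sub_eq_zero.1 this
  rw [Matrix.rank_of_isUnit _ (Matrix.mulVec_injective_iff_isUnit.1 hinj), Fintype.card_fin]


lemma e₀_zero : (e₀ : Fin (n+1) → ℝ) 0 = 1 := by simp [e₀]
lemma e₀_succ (p : Fin n) : (e₀ : Fin (n+1) → ℝ) p.succ = 0 := by
  simp [e₀, Pi.single_apply, Fin.succ_ne_zero]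
lemma single_succ_succ (j p : Fin n) :
    (Pi.single j.succ (1:ℝ) : Fin (n+1) → ℝ) p.succ = if p = j then 1 else 0 := by
  simp [Pi.single_apply, Fin.succ_inj]
lemma single_succ_zero (j : Fin n) :
    (Pi.single j.succ (1:ℝ) : Fin (n+1) → ℝ) 0 = 0 := by
  simp [Pi.single_apply, (Fin.succ_ne_zero j).symm]

lemma pair_e₀ (lam : Fin n → ℝ) : pair lam (e₀ : Fin (n+1) → ℝ) = 1 := by
  simp [pair, e₀_zero, e₀_succ]
lemma pair_plus (lam : Fin n → ℝ) (j : Fin n) :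
    pair lam (e₀ + Pi.single j.succ 1) = 1 + lam j := by
  simp [pair, e₀_zero, e₀_succ, single_succ_zero, single_succ_succ, mul_ite]
lemma pair_minus (lam : Fin n → ℝ) (j : Fin n) :
    pair lam (e₀ - Pi.single j.succ 1) = 1 - lam j := by
  simp [pair, e₀_zero, e₀_succ, single_succ_zero, single_succ_succ, mul_ite, sub_eq_add_neg]

lemma gram_eq_Mexp (lam : Fin n → ℝ) :
    (∑ k : Idx n, (3 * cc n k * pair lam (aa k)) • Matrix.vecMulVec (aa k) (aa k))
      = Mexp lam := by
  funext i i'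
  rw [Matrix.sum_apply]
  simp only [Matrix.smul_apply, Matrix.vecMulVec_apply, smul_eq_mul]
  rw [Fintype.sum_sum_type, Fintype.sum_sum_type, Fin.sum_univ_one]
  simp only [aa, cc, Sum.elim_inl, Sum.elim_inr, pair_e₀, pair_plus, pair_minus]
  refine Fin.cases ?_ ?_ i
  · refine Fin.cases ?_ ?_ i'
    · -- (0,0)
      rw [show Mexp lam 0 0 = 3 by simp [Mexp]]
      simp only [e₀_zero, Pi.add_apply, Pi.sub_apply, single_succ_zero]
      rw [← Finset.sum_add_distrib]
      rw [show ∑ j : Fin n, ((3 * -(1/6) * (1 + lam j)) * ((1 + (0:ℝ)) * (1 + 0))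
            + (3 * -(1/6) * (1 - lam j)) * ((1 - (0:ℝ)) * (1 - 0))) = ∑ _j : Fin n, (-1 : ℝ) from
        Finset.sum_congr rfl fun j _ => by ring]
      rw [Finset.sum_const, Finset.card_univ, Fintype.card_fin, nsmul_eq_mul]
      ring
    · -- (0, q.succ)
      intro q
      rw [show Mexp lam 0 q.succ = -(lam q) by simp [Mexp, Fin.succ_ne_zero q]]
      simp only [e₀_zero, e₀_succ, Pi.add_apply, Pi.sub_apply, single_succ_zero, single_succ_succ]
      rw [show ∑ j : Fin n, (3 * -(1/6) * (1 + lam j)) * ((1 + (0:ℝ)) * (0 + if q = j then 1 else 0))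
            = ∑ j : Fin n, (if q = j then 3 * -(1/6) * (1 + lam j) else 0) from
        Finset.sum_congr rfl fun j _ => by by_cases h : q = j <;> simp [h]]
      rw [show ∑ j : Fin n, (3 * -(1/6) * (1 - lam j)) * ((1 - (0:ℝ)) * (0 - if q = j then 1 else 0))
            = ∑ j : Fin n, (if q = j then -(3 * -(1/6) * (1 - lam j)) else 0) from
        Finset.sum_congr rfl fun j _ => by by_cases h : q = j <;> simp [h]]
      rw [Finset.sum_ite_eq, Finset.sum_ite_eq]
      simp only [Finset.mem_univ, if_pos]
      ring
  · -- (p.succ, ?)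
    intro p
    refine Fin.cases ?_ ?_ i'
    · -- (p.succ, 0)
      rw [show Mexp lam p.succ 0 = -(lam p) by simp [Mexp, Fin.succ_ne_zero p]]
      simp only [e₀_zero, e₀_succ, Pi.add_apply, Pi.sub_apply, single_succ_zero, single_succ_succ]
      rw [show ∑ j : Fin n, (3 * -(1/6) * (1 + lam j)) * (((0:ℝ) + if p = j then 1 else 0) * (1 + 0))
            = ∑ j : Fin n, (if p = j then 3 * -(1/6) * (1 + lam j) else 0) from
        Finset.sum_congr rfl fun j _ => by by_cases h : p = j <;> simp [h]]
      rw [show ∑ j : Fin n, (3 * -(1/6) * (1 - lam j)) * (((0:ℝ) - if p = j then 1 else 0) * (1 - 0))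
            = ∑ j : Fin n, (if p = j then -(3 * -(1/6) * (1 - lam j)) else 0) from
        Finset.sum_congr rfl fun j _ => by by_cases h : p = j <;> simp [h]]
      rw [Finset.sum_ite_eq, Finset.sum_ite_eq]
      simp only [Finset.mem_univ, if_pos]
      ring
    · -- (p.succ, q.succ)
      intro q
      by_cases hpq : p = q
      · subst hpq
        rw [show Mexp lam p.succ p.succ = -1 by
          simp [Mexp, Fin.succ_ne_zero p]]
        simp only [e₀_zero, e₀_succ, Pi.add_apply, Pi.sub_apply, single_succ_zero,
          single_succ_succ]
        rw [show ∑ j : Fin n, (3 * -(1/6) * (1 + lam j))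
              * (((0:ℝ) + if p = j then 1 else 0) * ((0:ℝ) + if p = j then 1 else 0))
              = ∑ j : Fin n, (if p = j then 3 * -(1/6) * (1 + lam j) else 0) from
          Finset.sum_congr rfl fun j _ => by by_cases h : p = j <;> simp [h]]
        rw [show ∑ j : Fin n, (3 * -(1/6) * (1 - lam j))
              * (((0:ℝ) - if p = j then 1 else 0) * ((0:ℝ) - if p = j then 1 else 0))
              = ∑ j : Fin n, (if p = j then 3 * -(1/6) * (1 - lam j) else 0) from
          Finset.sum_congr rfl fun j _ => by by_cases h : p = j <;> simp [h]]
        rw [Finset.sum_ite_eq, Finset.sum_ite_eq]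
        simp only [Finset.mem_univ, if_pos]
        ring
      · rw [show Mexp lam p.succ q.succ = 0 by
          simp [Mexp, Fin.succ_ne_zero p, Fin.succ_ne_zero q, Fin.succ_inj.not.2 hpq]]
        simp only [e₀_zero, e₀_succ, Pi.add_apply, Pi.sub_apply, single_succ_zero,
          single_succ_succ]
        rw [Finset.sum_eq_zero (fun j _ => ?_), Finset.sum_eq_zero (fun j _ => ?_)]
        · ring
        · by_cases h1 : p = j <;> by_cases h2 : q = j <;> simp_all
        · by_cases h1 : p = j <;> by_cases h2 : q = j <;> simp_all


/-! ### Rank bound for sums of rank-one matrices -/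

lemma rank_le_of_support {ι : Type*} [Fintype ι] (μ : ι → ℝ) (a : ι → Fin (n + 1) → ℝ)
    (S : Set (Fin (n + 1) → ℝ)) (hS : ∀ k, μ k ≠ 0 → a k ∈ S) :
    ((∑ k, μ k • Matrix.vecMulVec (a k) (a k)).rank : ℕ)
      ≤ Module.finrank ℝ (Submodule.span ℝ S) := by
  set M := ∑ k, μ k • Matrix.vecMulVec (a k) (a k) with hM
  have hrange : LinearMap.range M.mulVecLin ≤ Submodule.span ℝ S := by
    rintro y ⟨x, rfl⟩
    rw [Matrix.mulVecLin_apply]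
    have hmv : M.mulVec x = ∑ k, (μ k * dotProduct (a k) x) • a k := by
      funext i
      simp only [Matrix.mulVec, dotProduct, hM, Matrix.sum_apply, Matrix.smul_apply,
        Matrix.vecMulVec_apply, smul_eq_mul, Finset.sum_apply, Pi.smul_apply, Finset.sum_mul]
      rw [Finset.sum_comm]
      exact Finset.sum_congr rfl fun k _ => by rw [mul_comm (μ k) _, Finset.sum_mul, Finset.sum_mul]; exact Finset.sum_congr rfl fun j _ => by ring
    rw [hmv]
    refine Submodule.sum_mem _ fun k _ => ?_
    by_cases h : μ k = 0
    · simp [h]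
    · exact Submodule.smul_mem _ _ (Submodule.subset_span (hS k h))
  exact Submodule.finrank_mono hrange


end Stmt17Aux

theorem stmt_17 (n : ℕ) (hn : 1 ≤ n)
    (F : MvPolynomial (Fin (n + 1)) ℝ)
    (hF : F = X 0 * (X 0 ^ 2 - ∑ i : Fin (n + 1), if i = 0 then 0 else X i ^ 2)) :
    (∀ lam : Fin n → ℝ,
      (gramMatrix n (pderiv 0 F + ∑ k : Fin n, C (lam k) * pderiv k.succ F)).rank = n + 1) ∧
    (∀ (s : ℕ) (c : Fin s → ℝ) (L : Fin s → MvPolynomial (Fin (n + 1)) ℝ),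
      (∀ k, IsLinearForm (L k)) → F = ∑ k, C (c k) * L k ^ 3 → 2 * n + 1 ≤ s) ∧
    (∃ (c : Fin (2 * n + 1) → ℝ) (L : Fin (2 * n + 1) → MvPolynomial (Fin (n + 1)) ℝ),
      (∀ k, IsLinearForm (L k)) ∧ F = ∑ k, C (c k) * L k ^ 3) := by
  classical
  open Stmt17Aux in
  have hFd : F = ∑ k : Idx n, C (cc n k) * (lin (aa k)) ^ 3 := hF.trans (hFdecomp n)
  have part1 : ∀ lam : Fin n → ℝ,
      (gramMatrix n (pderiv 0 F + ∑ k : Fin n, C (lam k) * pderiv k.succ F)).rank = n + 1 := by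
    intro lam
    rw [hFd, gram_deriv (cc n) aa lam, gram_eq_Mexp, Mexp_rank]
  refine ⟨part1, ?_, ?_⟩
  · -- lower bound
    intro s c L hLin hdec
    choose a ha using hLin
    have hdec' : F = ∑ k, C (c k) * (lin (a k)) ^ 3 := by
      rw [hdec]
      exact Finset.sum_congr rfl fun k _ => by rw [ha k]; rfl
    have hgram : ∀ lam : Fin n → ℝ,
        (∑ k, (3 * c k * pair lam (a k)) • Matrix.vecMulVec (a k) (a k)).rank = n + 1 := by
      intro lam
      have h := part1 lam
      rw [hdec', gram_deriv c a lam] at h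
      exact h
    have hfinrank_pi : Module.finrank ℝ (Fin (n + 1) → ℝ) = n + 1 := Module.finrank_fin_fun ℝ
    -- the coefficient vectors span everything
    have hspan : Submodule.span ℝ (Set.range a) = ⊤ := by
      by_contra hne
      have hlt : Submodule.span ℝ (Set.range a) < ⊤ := lt_top_iff_ne_top.2 hne
      have hfr : Module.finrank ℝ (Submodule.span ℝ (Set.range a)) < n + 1 := by
        have := Submodule.finrank_lt (K := ℝ) (V := Fin (n + 1) → ℝ) hlt.ne
        omega
      have hle := rank_le_of_support (fun k => 3 * c k * pair 0 (a k)) a (Set.range a)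
        (fun k _ => ⟨k, rfl⟩)
      rw [hgram 0] at hle
      omega
    -- extract a basis from the coefficient vectors
    obtain ⟨t, hts, htspan, htli⟩ := exists_linearIndependent ℝ (Set.range a)
    rw [hspan] at htspan
    have htfin : t.Finite := (Set.finite_range a).subset hts
    haveI := htfin.fintype
    let B : Module.Basis t ℝ (Fin (n + 1) → ℝ) :=
      Module.Basis.mk htli (by rw [Subtype.range_coe]; exact htspan.ge)
    have hcardt : Fintype.card t = n + 1 := by
      rw [← Module.finrank_eq_card_basis B, hfinrank_pi]
    -- the functional
    set E0 : Fin (n + 1) → ℝ := Pi.single 0 1 with hE0def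
    obtain ⟨j, hj⟩ : ∃ j : t, B.repr E0 j ≠ 0 := by
      by_contra hall
      push_neg at hall
      have : B.repr E0 = 0 := Finsupp.ext fun j => hall j
      have hE0z : E0 = 0 := by
        have := congrArg B.repr.symm this
        simpa using this
      have := congrFun hE0z 0
      simp [hE0def] at this
    have hφ₀S : ∀ u ∈ t, u ≠ (j : Fin (n + 1) → ℝ) → B.coord j u = 0 := by
      intro u hu hne
      have hBu : u = B ⟨u, hu⟩ := (Module.Basis.mk_apply htli _ ⟨u, hu⟩).symm
      rw [hBu, Module.Basis.coord_apply, Module.Basis.repr_self, Finsupp.single_apply]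
      rw [if_neg]
      intro hjj
      exact hne (by rw [hBu, hjj]; exact Module.Basis.mk_apply htli _ j)
    have hφ₀e : B.coord j E0 ≠ 0 := by rwa [Module.Basis.coord_apply]
    set φ : (Fin (n + 1) → ℝ) →ₗ[ℝ] ℝ := (B.coord j E0)⁻¹ • B.coord j with hφdef
    have hφe : φ E0 = 1 := by
      simp only [hφdef, LinearMap.smul_apply, smul_eq_mul, Module.Basis.coord_apply]
      exact inv_mul_cancel₀ hj
    have hφS : ∀ u ∈ t, u ≠ (j : Fin (n + 1) → ℝ) → φ u = 0 := by
      intro u hu hne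
      simp [hφdef, hφ₀S u hu hne]
    set lam : Fin n → ℝ := fun k => φ (Pi.single k.succ 1) with hlamdef
    have hpair : ∀ b : Fin (n + 1) → ℝ, pair lam b = φ b := by
      intro b
      have hb : b = ∑ i, b i • (Pi.single i 1 : Fin (n + 1) → ℝ) := by
        funext x
        rw [Finset.sum_apply]
        simp [Pi.single_apply]
      conv_rhs => rw [hb]
      rw [map_sum, Fin.sum_univ_succ]
      simp only [map_smul, smul_eq_mul]
      rw [← hE0def, hφe, pair, mul_one]
      exact congrArg₂ (·+·) rfl (Finset.sum_congr rfl fun k _ => by rw [hlamdef]; ring)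
    -- counting
    set T : Finset (Fin s) := Finset.univ.filter (fun k => 3 * c k * pair lam (a k) ≠ 0) with hTdef
    have hrankT : n + 1 ≤ T.card := by
      have hle := rank_le_of_support (fun k => 3 * c k * pair lam (a k)) a
        (↑(T.image a) : Set (Fin (n + 1) → ℝ)) ?_
      · rw [hgram lam] at hle
        calc n + 1 ≤ Module.finrank ℝ (Submodule.span ℝ (↑(T.image a) : Set (Fin (n+1) → ℝ))) := hle
          _ ≤ (T.image a).card := by
              simpa [Set.finrank] using finrank_span_finset_le_card (R := ℝ) (T.image a)
          _ ≤ T.card := Finset.card_image_le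
      · intro k hk
        exact Finset.mem_coe.2 (Finset.mem_image.2 ⟨k, Finset.mem_filter.2 ⟨Finset.mem_univ k, hk⟩, rfl⟩)
    have hTs : T.card ≤ s := le_trans (Finset.card_le_card (Finset.subset_univ T)) (by simp)
    have hspos : 0 < s := by omega
    -- injection from t \ {j} into the complement of T
    have hsel : ∀ u ∈ t.toFinset.erase (j : Fin (n + 1) → ℝ), ∃ k, k ∉ T ∧ a k = u := by
      intro u hu
      obtain ⟨hne, hu'⟩ := Finset.mem_erase.1 hu
      have hut : u ∈ t := Set.mem_toFinset.1 hu'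
      obtain ⟨k, hk⟩ := hts hut
      refine ⟨k, ?_, hk⟩
      rw [hTdef]
      simp only [Finset.mem_filter, Finset.mem_univ, true_and, not_not]
      rw [hpair, hk, hφS u hut hne, mul_zero]
    have hcount : n ≤ Tᶜ.card := by
      have hcard_erase : (t.toFinset.erase (j : Fin (n + 1) → ℝ)).card = n := by
        rw [Finset.card_erase_of_mem (Set.mem_toFinset.2 j.2), Set.toFinset_card, hcardt]
        omega
      rw [← hcard_erase]
      refine Finset.card_le_card_of_injOn
        (fun u => if h : ∃ k, k ∉ T ∧ a k = u then h.choose else ⟨0, hspos⟩) ?_ ?_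
      · intro u hu
        have h := hsel u hu
        dsimp only
        rw [dif_pos h]
        exact Finset.mem_compl.2 h.choose_spec.1
      · intro u1 hu1 u2 hu2 heq
        have h1 := hsel u1 (Finset.mem_coe.1 hu1)
        have h2 := hsel u2 (Finset.mem_coe.1 hu2)
        dsimp only at heq
        rw [dif_pos h1, dif_pos h2] at heq
        rw [← h1.choose_spec.2, ← h2.choose_spec.2, heq]
    rw [Finset.card_compl, Fintype.card_fin] at hcount
    omega
  · -- upper bound: the explicit decomposition
    refine ⟨fun k => cc n ((idxEquiv n).symm k), fun k => lin (aa ((idxEquiv n).symm k)),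
      fun k => isLinearForm_lin _, ?_⟩
    rw [hFd]
    exact (Equiv.sum_comp (idxEquiv n).symm
      (fun k => C (cc n k) * (lin (aa k)) ^ 3)).symm
end
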